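/- Let 𝒪 = ℂ[[t]], 𝒦 = ℂ((t)), and let 𝔭 ⊂ sl_4(ℂ) be the parabolic of matrices whose last row vanishes except in the last entry, with nilpotent radical 𝔫 consisting of matrices supported in the first three entries of the last column. For A ∈ t^{−1}𝔫 + sl_4(𝒪), the characteristic coefficients satisfy c_2(A) ∈ t^{−1}𝒪, c_3(A) ∈ t^{−1}𝒪, and c_4(A) ∈ t^{−1}𝒪, where det(λI − A) = λ⁴ + c_2(A)λ² + c_3(A)λ + c_4(A). Moreover, there exists A ∈ t^{−1}𝔫 + sl_4(𝒪) such that the trace Tr(A⁴) has a pole of order 2 at t = 0. -/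

import Mathlib

open Matrix Polynomial

/-- Membership in `t⁻¹𝔫 + sl₄(𝒪) ⊂ sl₄(𝒦)`, where `𝒦 = ℂ((t))` (Laurent series),
`𝒪 = ℂ[[t]]`, and `𝔫 ⊂ sl₄` consists of matrices supported in the first three entries of
the last column. -/
def InParahoricPerp (A : Matrix (Fin 4) (Fin 4) (LaurentSeries ℂ)) : Prop :=
  ∃ (y : Matrix (Fin 4) (Fin 4) ℂ) (z : Matrix (Fin 4) (Fin 4) (PowerSeries ℂ)),
    (∀ i j : Fin 4, ¬(j = 3 ∧ i ≠ 3) → y i j = 0) ∧ Matrix.trace z = 0 ∧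
    A = (HahnSeries.single (-1 : ℤ) (1 : ℂ) : LaurentSeries ℂ) •
          y.map (fun c => HahnSeries.ofPowerSeries ℤ ℂ (PowerSeries.C c)) +
        z.map (HahnSeries.ofPowerSeries ℤ ℂ)

noncomputable section Aux

private abbrev φL : PowerSeries ℂ →+* LaurentSeries ℂ := HahnSeries.ofPowerSeries ℤ ℂ

private abbrev tL : LaurentSeries ℂ := HahnSeries.single (1 : ℤ) (1 : ℂ)
private abbrev uL : LaurentSeries ℂ := HahnSeries.single (-1 : ℤ) (1 : ℂ)

private lemma htu : tL * uL = 1 := by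
  rw [HahnSeries.single_mul_single]; norm_num [HahnSeries.single_zero_one]

private def Baux (y : Matrix (Fin 4) (Fin 4) ℂ) (z : Matrix (Fin 4) (Fin 4) (PowerSeries ℂ)) :
    Matrix (Fin 4) (Fin 4) (Polynomial (PowerSeries ℂ)) :=
  Matrix.of fun i j =>
    if j = 3 then
      (if i = 3 then Polynomial.C PowerSeries.X * Polynomial.X else 0) -
        Polynomial.C (PowerSeries.C (y i 3) + PowerSeries.X * z i 3)
    else (if i = j then Polynomial.X else 0) - Polynomial.C (z i j)

set_option maxHeartbeats 1000000 in
private lemma key (y : Matrix (Fin 4) (Fin 4) ℂ) (z : Matrix (Fin 4) (Fin 4) (PowerSeries ℂ))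
    (hy : ∀ i j : Fin 4, ¬(j = 3 ∧ i ≠ 3) → y i j = 0) :
    Polynomial.C tL *
      (uL • y.map (fun c => φL (PowerSeries.C c)) + z.map φL).charpoly =
      ((Baux y z).det).map φL := by
  set A : Matrix (Fin 4) (Fin 4) (LaurentSeries ℂ) :=
    uL • y.map (fun c => φL (PowerSeries.C c)) + z.map φL with hAdef
  have hA : ∀ i j, A i j = uL * φL (PowerSeries.C (y i j)) + φL (z i j) := by
    intro i j
    simp [hAdef, Matrix.add_apply, Matrix.smul_apply, Matrix.map_apply, smul_eq_mul]
  have htA : ∀ i : Fin 4, tL * A i 3 = φL (PowerSeries.C (y i 3) + PowerSeries.X * z i 3) := by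
    intro i
    rw [hA, mul_add, ← mul_assoc, htu, one_mul, map_add,
      _root_.map_mul φL PowerSeries.X (z i 3), HahnSeries.ofPowerSeries_X]
  have hA0 : ∀ i j, j ≠ 3 → A i j = φL (z i j) := by
    intro i j hj
    rw [hA, hy i j (by tauto), map_zero, map_zero, mul_zero, zero_add]
  have h1 : Polynomial.C tL * A.charpoly =
      ((charmatrix A).updateCol 3 (Polynomial.C tL • fun i => charmatrix A i 3)).det := by
    rw [Matrix.det_updateCol_smul, Matrix.updateCol_eq_self, Matrix.charpoly]
  have h2 : (charmatrix A).updateCol 3 (Polynomial.C tL • fun i => charmatrix A i 3) =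
      (Polynomial.mapRingHom φL).mapMatrix (Baux y z) := by
    refine Matrix.ext fun i j => ?_
    rw [RingHom.mapMatrix_apply, Matrix.map_apply, Matrix.updateCol_apply,
      Polynomial.coe_mapRingHom]
    by_cases hj : j = 3
    · subst hj
      rw [if_pos rfl]
      simp only [Pi.smul_apply, smul_eq_mul, Baux, Matrix.of_apply]
      rw [if_pos trivial]
      by_cases hi : i = (3 : Fin 4)
      · subst hi
        rw [if_pos rfl, charmatrix_apply_eq, Polynomial.map_sub, Polynomial.map_mul, Polynomial.map_X,
          Polynomial.map_C, Polynomial.map_C, HahnSeries.ofPowerSeries_X, ← htA 3,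
          Polynomial.C_mul]
        exact mul_sub _ _ _
      · rw [if_neg hi, Polynomial.map_sub, Polynomial.map_zero, Polynomial.map_C, ← htA i,
          Polynomial.C_mul, zero_sub, charmatrix_apply_ne _ _ _ hi]
        exact mul_neg _ _
    · rw [if_neg hj]
      simp only [Baux, Matrix.of_apply]
      rw [if_neg hj]
      by_cases hi : i = j
      · subst hi
        rw [charmatrix_apply_eq, if_pos rfl, hA0 i i hj, Polynomial.map_sub, Polynomial.map_C,
          Polynomial.map_X]
      · rw [charmatrix_apply_ne _ _ _ hi, if_neg hi, hA0 i j hj, Polynomial.map_sub,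
          Polynomial.map_C, Polynomial.map_zero, zero_sub]
  rw [h1, h2, ← RingHom.map_det]
  rfl

end Aux

/-- For every `A ∈ t⁻¹𝔫 + sl₄(𝒪)`, writing `det(λI - A) = λ⁴ + c₂λ² + c₃λ + c₄`
(the `λ³`-coefficient vanishes), the coefficients satisfy `c₂, c₃, c₄ ∈ t⁻¹𝒪`; moreover
there exists such an `A` for which `Tr(A⁴)` has a pole of order `2` at `t = 0`. -/
theorem sl4_example :
    (∀ A : Matrix (Fin 4) (Fin 4) (LaurentSeries ℂ), InParahoricPerp A →
      A.charpoly.coeff 3 = 0 ∧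
      ∀ j ∈ ({0, 1, 2} : Finset ℕ),
        (HahnSeries.single (1 : ℤ) (1 : ℂ) : LaurentSeries ℂ) * A.charpoly.coeff j ∈
          Set.range (HahnSeries.ofPowerSeries ℤ ℂ)) ∧
    (∃ A : Matrix (Fin 4) (Fin 4) (LaurentSeries ℂ), InParahoricPerp A ∧
      (Matrix.trace (A ^ 4)).order = (-2 : ℤ)) := by
  constructor
  · intro A hA
    obtain ⟨y, z, hy, htr, rfl⟩ := hA
    set M : Matrix (Fin 4) (Fin 4) (LaurentSeries ℂ) :=
      (HahnSeries.single (-1 : ℤ) (1 : ℂ) : LaurentSeries ℂ) •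
          y.map (fun c => HahnSeries.ofPowerSeries ℤ ℂ (PowerSeries.C c)) +
        z.map (HahnSeries.ofPowerSeries ℤ ℂ) with hM
    have hdiag : ∀ i : Fin 4, M i i = φL (z i i) := by
      intro i
      have hyii : y i i = 0 := hy i i (fun h => h.2 h.1)
      simp [hM, Matrix.add_apply, Matrix.smul_apply, Matrix.map_apply, hyii]
    have htr0 : Matrix.trace M = 0 := by
      calc Matrix.trace M = ∑ i : Fin 4, M i i := by simp [Matrix.trace, Matrix.diag]
        _ = ∑ i : Fin 4, φL (z i i) := Finset.sum_congr rfl fun i _ => hdiag i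
        _ = φL (∑ i : Fin 4, z i i) := (map_sum φL _ _).symm
        _ = φL (Matrix.trace z) := rfl
        _ = 0 := by rw [htr, map_zero]
    constructor
    · have hc := Matrix.trace_eq_neg_charpoly_coeff M
      rw [htr0] at hc
      simpa using hc.symm
    · intro j _
      have hk := key y z hy
      refine ⟨(Baux y z).det.coeff j, ?_⟩
      calc φL ((Baux y z).det.coeff j)
          = (((Baux y z).det).map φL).coeff j := (Polynomial.coeff_map _ _).symm
        _ = (Polynomial.C tL * M.charpoly).coeff j := by rw [hk]
        _ = tL * M.charpoly.coeff j := Polynomial.coeff_C_mul _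
  · refine ⟨!![0, 0, 0, uL; 0, 0, 0, 0; 0, 0, 0, 0; 1, 0, 0, 0], ?_, ?_⟩
    · refine ⟨!![0, 0, 0, 1; 0, 0, 0, 0; 0, 0, 0, 0; 0, 0, 0, 0],
        !![0, 0, 0, 0; 0, 0, 0, 0; 0, 0, 0, 0; 1, 0, 0, 0], ?_, ?_, ?_⟩
      · intro i j h
        fin_cases i <;> fin_cases j <;> simp_all [Matrix.vecHead, Matrix.vecTail]
      · simp [Matrix.trace, Matrix.diag, Fin.sum_univ_four, Matrix.vecHead, Matrix.vecTail]
      · ext i j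
        fin_cases i <;> fin_cases j <;>
          simp [Matrix.add_apply, Matrix.smul_apply, Matrix.map_apply, Matrix.vecHead, Matrix.vecTail]
    · set N : Matrix (Fin 4) (Fin 4) (LaurentSeries ℂ) :=
        !![0, 0, 0, uL; 0, 0, 0, 0; 0, 0, 0, 0; 1, 0, 0, 0] with hN
      have h2 : N * N = !![uL, 0, 0, 0; 0, 0, 0, 0; 0, 0, 0, 0; 0, 0, 0, uL] := by
        ext i j
        fin_cases i <;> fin_cases j <;>
          simp [hN, Matrix.mul_apply, Fin.sum_univ_four, Matrix.vecHead, Matrix.vecTail]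
      have h4 : N ^ 4 = (N * N) * (N * N) := by
        rw [pow_succ, pow_succ, pow_succ, pow_one, mul_assoc]
      have hsing : (HahnSeries.single (-2 : ℤ) (1 : ℂ) : LaurentSeries ℂ) +
          HahnSeries.single (-2 : ℤ) (1 : ℂ) = HahnSeries.single (-2 : ℤ) (2 : ℂ) := by
        ext g
        by_cases hg : g = (-2 : ℤ) <;>
          simp [hg, HahnSeries.coeff_single]
        norm_num
      have h6 : Matrix.trace (N ^ 4) = HahnSeries.single (-2 : ℤ) (2 : ℂ) := by
        rw [h4, h2, ← hsing]
        simp [Matrix.trace, Matrix.diag, Matrix.mul_apply, Fin.sum_univ_four, Matrix.vecHead,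
          Matrix.vecTail, HahnSeries.single_mul_single]
      rw [h6, HahnSeries.order_single two_ne_zero]
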